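/- Suppose (X_1,…,X_K) are n×n complex matrices and at least one X_l has n distinct eigenvalues. Then (X_1,…,X_K) is simultaneously diagonalizable if and only if rank(Ξ(X_1,…,X_K)) = n² − n. -/

import Mathlib

open Matrix Kronecker

/-- Column-stacking vectorization: `vecM X (j, i) = X i j`
(the pair `(j, i)` encodes position `(j-1)*n + i`). -/
def vecM {n : ℕ} (X : Matrix (Fin n) (Fin n) ℂ) : Fin n × Fin n → ℂ :=
  fun p => X p.2 p.1

/-- The Kronecker sum `I_n ⊗ X - Xᵀ ⊗ I_n`. -/
def kronSum {n : ℕ} (X : Matrix (Fin n) (Fin n) ℂ) :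
    Matrix (Fin n × Fin n) (Fin n × Fin n) ℂ :=
  (1 : Matrix (Fin n) (Fin n) ℂ) ⊗ₖ X - Xᵀ ⊗ₖ (1 : Matrix (Fin n) (Fin n) ℂ)

/-- `Ξ(X_1, …, X_K)`: the vertical stack of the `I_n ⊗ X_k - X_kᵀ ⊗ I_n`. -/
def XiM {n K : ℕ} (X : Fin K → Matrix (Fin n) (Fin n) ℂ) :
    Matrix (Fin K × (Fin n × Fin n)) (Fin n × Fin n) ℂ :=
  fun p q => kronSum (X p.1) p.2 q

/-- Simultaneous diagonalizability of a tuple. -/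
def SimDiag {n K : ℕ} (X : Fin K → Matrix (Fin n) (Fin n) ℂ) : Prop :=
  ∃ S : Matrix (Fin n) (Fin n) ℂ, IsUnit S ∧ ∀ k, (S⁻¹ * X k * S).IsDiag

/-- `X` has `n` distinct eigenvalues. -/
def HasDistinctEigenvalues {n : ℕ} (X : Matrix (Fin n) (Fin n) ℂ) : Prop :=
  ∃ μ : Fin n → ℂ, Function.Injective μ ∧
    ∀ i, Module.End.HasEigenvalue (Matrix.mulVecLin X) (μ i)

/-- Squared Frobenius norm. -/
noncomputable def frobSq {m p : Type*} [Fintype m] [Fintype p] (X : Matrix m p ℂ) : ℝ :=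
  ∑ i, ∑ j, ‖X i j‖ ^ 2

/-- Khatri–Rao (column-wise Kronecker) product. -/
def khatriRao {n : ℕ} (X Y : Matrix (Fin n) (Fin n) ℂ) :
    Matrix (Fin n × Fin n) (Fin n) ℂ :=
  fun p j => X p.1 j * Y p.2 j

lemma kronSum_mulVec {n : ℕ} (A V : Matrix (Fin n) (Fin n) ℂ) :
    (kronSum A) *ᵥ (vecM V) = vecM (A * V - V * A) := by
  funext p
  obtain ⟨j, i⟩ := p
  simp only [kronSum, vecM, mulVec, dotProduct, Fintype.sum_prod_type, Matrix.sub_apply,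
    kroneckerMap_apply, one_apply, transpose_apply, mul_apply]
  calc ∑ x : Fin n, ∑ x_1 : Fin n,
        ((if j = x then 1 else 0) * A i x_1 - A x j * if i = x_1 then 1 else 0) * V x_1 x
      = (∑ x : Fin n, ∑ x_1 : Fin n, if j = x then A i x_1 * V x_1 x else 0)
        - ∑ x : Fin n, ∑ x_1 : Fin n, if i = x_1 then A x j * V x_1 x else 0 := by
        rw [← Finset.sum_sub_distrib]
        refine Finset.sum_congr rfl fun x _ => ?_
        rw [← Finset.sum_sub_distrib]
        refine Finset.sum_congr rfl fun y _ => ?_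
        split_ifs <;> ring
    _ = ∑ j_1 : Fin n, A i j_1 * V j_1 j - ∑ j_1 : Fin n, V i j_1 * A j_1 j := by
        congr 1
        · rw [Finset.sum_comm]
          simp [Finset.sum_ite_eq]
        · simp [Finset.sum_ite_eq, mul_comm]

/-- inverse of `vecM` -/
def unvecM {n : ℕ} (v : Fin n × Fin n → ℂ) : Matrix (Fin n) (Fin n) ℂ :=
  fun i j => v (j, i)

@[simp] lemma vecM_unvecM {n : ℕ} (v : Fin n × Fin n → ℂ) : vecM (unvecM v) = v := rfl
@[simp] lemma unvecM_vecM {n : ℕ} (V : Matrix (Fin n) (Fin n) ℂ) : unvecM (vecM V) = V := rfl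

lemma vecM_injective {n : ℕ} : Function.Injective (vecM (n := n)) :=
  fun _ _ h => congrArg unvecM h

lemma vecM_eq_zero {n : ℕ} {V : Matrix (Fin n) (Fin n) ℂ} : vecM V = 0 ↔ V = 0 := by
  constructor
  · intro h; exact vecM_injective (by exact h)
  · rintro rfl; rfl

lemma kronSum_mem_ker {n : ℕ} (A V : Matrix (Fin n) (Fin n) ℂ) :
    (kronSum A) *ᵥ (vecM V) = 0 ↔ A * V = V * A := by
  rw [kronSum_mulVec, vecM_eq_zero, sub_eq_zero]

lemma XiM_mulVec {n K : ℕ} (X : Fin K → Matrix (Fin n) (Fin n) ℂ) (v : Fin n × Fin n → ℂ) :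
    (XiM X) *ᵥ v = fun p => ((kronSum (X p.1)) *ᵥ v) p.2 := rfl

lemma mem_ker_XiM {n K : ℕ} (X : Fin K → Matrix (Fin n) (Fin n) ℂ)
    (V : Matrix (Fin n) (Fin n) ℂ) :
    vecM V ∈ LinearMap.ker (XiM X).mulVecLin ↔ ∀ k, X k * V = V * X k := by
  rw [LinearMap.mem_ker, mulVecLin_apply]
  constructor
  · intro h k
    rw [← kronSum_mem_ker]
    funext p
    exact congrFun h (k, p)
  · intro h
    funext q
    obtain ⟨k, p⟩ := q
    have := (kronSum_mem_ker (X k) V).2 (h k)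
    exact congrFun this p

lemma conjMulConj {n : ℕ} (S : Matrix (Fin n) (Fin n) ℂ) [Invertible S]
    (A B : Matrix (Fin n) (Fin n) ℂ) :
    (S * A * S⁻¹) * (S * B * S⁻¹) = S * (A * B) * S⁻¹ := by
  simp only [Matrix.mul_assoc]
  rw [Matrix.inv_mul_cancel_left_of_invertible]

/-- `e ↦ vecM (S * diagonal e * S⁻¹)` as a linear map. -/
noncomputable def phi {n : ℕ} (S : Matrix (Fin n) (Fin n) ℂ) : (Fin n → ℂ) →ₗ[ℂ] (Fin n × Fin n → ℂ) where
  toFun e := vecM (S * diagonal e * S⁻¹)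
  map_add' a b := by
    have h : S * diagonal (a + b) * S⁻¹ = S * diagonal a * S⁻¹ + S * diagonal b * S⁻¹ := by
      have : (a + b) = fun i => a i + b i := rfl
      rw [this, ← diagonal_add, Matrix.mul_add, Matrix.add_mul]
    funext p
    simp [vecM, h]
  map_smul' c a := by
    have h : S * diagonal (c • a) * S⁻¹ = c • (S * diagonal a * S⁻¹) := by
      rw [diagonal_smul, Matrix.mul_smul, Matrix.smul_mul]
    funext p
    simp [vecM, h]

lemma phi_injective {n : ℕ} {S : Matrix (Fin n) (Fin n) ℂ} (hS : IsUnit S) :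
    Function.Injective (phi S) := by
  haveI := hS.invertible
  intro a b hab
  have h2 : S * diagonal a * S⁻¹ = S * diagonal b * S⁻¹ := vecM_injective hab
  have h3 : diagonal a = diagonal b := by
    have := congrArg (fun M => S⁻¹ * M * S) h2
    simpa [Matrix.mul_assoc, Matrix.inv_mul_cancel_left_of_invertible,
      Matrix.inv_mul_of_invertible, ← Matrix.mul_assoc,
      Matrix.inv_mul_cancel_right_of_invertible] using this
  funext i
  simpa using congrFun (congrFun h3 i) i

lemma isDiag_of_commute_diagonal {n : ℕ} {d : Fin n → ℂ} (hd : Function.Injective d)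
    {M : Matrix (Fin n) (Fin n) ℂ} (h : M * diagonal d = diagonal d * M) : M.IsDiag := by
  intro i j hij
  have h1 : M i j * d j = d i * M i j := by
    have := congrFun (congrFun h i) j
    simpa [mul_apply, diagonal, Finset.sum_ite_eq, Finset.sum_ite_eq'] using this
  have hdd : d i ≠ d j := fun hc => hij (hd hc)
  have : M i j * (d j - d i) = 0 := by ring_nf; linear_combination h1
  rcases mul_eq_zero.1 this with h' | h'
  · exact h'
  · exact absurd (sub_eq_zero.1 h').symm hdd

/-- commutant of `S * diagonal d * S⁻¹` with `d` injective is exactly the range of `phi S` -/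
lemma commutes_iff_mem_range_phi {n : ℕ} {S : Matrix (Fin n) (Fin n) ℂ} (hS : IsUnit S)
    {d : Fin n → ℂ} (hd : Function.Injective d) (V : Matrix (Fin n) (Fin n) ℂ) :
    (S * diagonal d * S⁻¹) * V = V * (S * diagonal d * S⁻¹) ↔ ∃ e, V = S * diagonal e * S⁻¹ := by
  haveI := hS.invertible
  constructor
  · intro h
    set W := S⁻¹ * V * S with hW
    have hcomm : W * diagonal d = diagonal d * W := by
      have := congrArg (fun M => S⁻¹ * M * S) h
      simp only [Matrix.mul_assoc] at this ⊢
      simpa [hW, Matrix.mul_assoc, Matrix.inv_mul_cancel_left_of_invertible,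
        Matrix.mul_inv_cancel_left_of_invertible] using this.symm
    have hWdiag : W.IsDiag := isDiag_of_commute_diagonal hd hcomm
    refine ⟨W.diag, ?_⟩
    rw [hWdiag.diagonal_diag, hW]
    simp [Matrix.mul_assoc, Matrix.mul_inv_cancel_left_of_invertible,
      Matrix.mul_inv_of_invertible, ← Matrix.mul_assoc,
      Matrix.mul_inv_cancel_right_of_invertible]
  · rintro ⟨e, rfl⟩
    have hfun : (fun i => d i * e i) = fun i => e i * d i := funext fun i => mul_comm _ _
    have hde : diagonal d * diagonal e = diagonal e * diagonal d := by
      rw [diagonal_mul_diagonal, diagonal_mul_diagonal, hfun]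
    rw [conjMulConj, conjMulConj, hde]

theorem test : True := trivial

@[simp] lemma phi_apply {n : ℕ} (S : Matrix (Fin n) (Fin n) ℂ) (e : Fin n → ℂ) :
    phi S e = vecM (S * diagonal e * S⁻¹) := rfl

lemma conj_inj {n : ℕ} (S : Matrix (Fin n) (Fin n) ℂ) [Invertible S]
    {A B : Matrix (Fin n) (Fin n) ℂ} (h : S * A * S⁻¹ = S * B * S⁻¹) : A = B := by
  have h2 := congrArg (fun M => S⁻¹ * M * S) h
  simpa [Matrix.mul_assoc, Matrix.inv_mul_cancel_left_of_invertible,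
    Matrix.inv_mul_of_invertible, Matrix.mul_inv_cancel_left_of_invertible] using h2

lemma conj_back {n : ℕ} (S : Matrix (Fin n) (Fin n) ℂ) [Invertible S]
    (A : Matrix (Fin n) (Fin n) ℂ) : S * (S⁻¹ * A * S) * S⁻¹ = A := by
  simp [Matrix.mul_assoc, Matrix.mul_inv_cancel_left_of_invertible,
    Matrix.mul_inv_of_invertible]

lemma exists_diagonalization {n : ℕ} {A : Matrix (Fin n) (Fin n) ℂ}
    (h : HasDistinctEigenvalues A) :
    ∃ (S : Matrix (Fin n) (Fin n) ℂ) (d : Fin n → ℂ), IsUnit S ∧ Function.Injective d ∧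
      A = S * diagonal d * S⁻¹ := by
  obtain ⟨μ, hμ, hev⟩ := h
  choose v hv using fun i => (hev i).exists_hasEigenvector
  have hli : LinearIndependent ℂ v :=
    Module.End.eigenvectors_linearIndependent' _ μ hμ v hv
  set S : Matrix (Fin n) (Fin n) ℂ := Matrix.of fun i j => v j i with hSdef
  have hS : IsUnit S := by
    rw [← Matrix.linearIndependent_cols_iff_isUnit]
    exact hli
  haveI := hS.invertible
  refine ⟨S, μ, hS, hμ, ?_⟩
  have hAS : A * S = S * diagonal μ := by
    funext i j
    have h1 : A *ᵥ v j = μ j • v j := (hv j).apply_eq_smul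
    calc (A * S) i j = (A *ᵥ v j) i := by simp [mul_apply, mulVec, dotProduct, hSdef]
      _ = μ j * v j i := by rw [h1]; rfl
      _ = (S * diagonal μ) i j := by
          simp [mul_apply, diagonal, Finset.sum_ite_eq, hSdef, mul_comm]
  rw [← hAS, Matrix.mul_inv_cancel_right_of_invertible]

theorem simDiag_iff_rank_eq_of_distinct_eigenvalues' {n K : ℕ}
    (X : Fin K → Matrix (Fin n) (Fin n) ℂ)
    (h : ∃ l, HasDistinctEigenvalues (X l)) :
    SimDiag X ↔ (XiM X).rank = n ^ 2 - n := by
  obtain ⟨l, hl⟩ := h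
  obtain ⟨S, d, hS, hd, hXl⟩ := exists_diagonalization hl
  haveI := hS.invertible
  set C := LinearMap.ker (XiM X).mulVecLin with hC
  set Cl := LinearMap.ker (kronSum (X l)).mulVecLin with hCl
  have hCle : C ≤ Cl := by
    intro v hv
    rw [LinearMap.mem_ker, mulVecLin_apply] at hv ⊢
    funext p
    exact congrFun hv (l, p)
  have hClr : Cl = LinearMap.range (phi S) := by
    ext v
    rw [LinearMap.mem_ker, mulVecLin_apply, LinearMap.mem_range]
    constructor
    · intro hv
      have h1 : X l * unvecM v = unvecM v * X l := by
        rw [← kronSum_mem_ker, vecM_unvecM]; exact hv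
      rw [hXl] at h1
      obtain ⟨e, he⟩ := (commutes_iff_mem_range_phi hS hd _).1 h1
      exact ⟨e, by rw [phi_apply, ← he, vecM_unvecM]⟩
    · rintro ⟨e, rfl⟩
      rw [phi_apply, kronSum_mem_ker, hXl]
      exact ((commutes_iff_mem_range_phi hS hd _).2 ⟨e, rfl⟩)
  have hfinfun : Module.finrank ℂ (Fin n → ℂ) = n := by
    simp [Module.finrank_fintype_fun_eq_card]
  have hdimCl : Module.finrank ℂ Cl = n := by
    rw [hClr, LinearMap.finrank_range_of_inj (phi_injective hS), hfinfun]
  have hranknul : (XiM X).rank + Module.finrank ℂ C = n ^ 2 := by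
    have h2 := LinearMap.finrank_range_add_finrank_ker (XiM X).mulVecLin
    have h3 : Module.finrank ℂ (Fin n × Fin n → ℂ) = n ^ 2 := by
      simp [Module.finrank_fintype_fun_eq_card, sq]
    rw [h3] at h2
    exact h2
  have hnn : n ≤ n ^ 2 := Nat.le_self_pow (by norm_num) n
  constructor
  · rintro ⟨T, hT, hTd⟩
    haveI := hT.invertible
    have hsub : LinearMap.range (phi T) ≤ C := by
      rintro v ⟨e, rfl⟩
      rw [phi_apply, hC, mem_ker_XiM]
      intro k
      have hk : X k = T * (T⁻¹ * X k * T) * T⁻¹ := (conj_back T (X k)).symm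
      rw [hk, ← (hTd k).diagonal_diag, conjMulConj, conjMulConj]
      have hde : diagonal (T⁻¹ * X k * T).diag * diagonal e
          = diagonal e * diagonal (T⁻¹ * X k * T).diag := by
        rw [diagonal_mul_diagonal, diagonal_mul_diagonal]
        exact congrArg diagonal (funext fun i => mul_comm _ _)
      rw [hde]
    have h1 : n ≤ Module.finrank ℂ C := by
      have := Submodule.finrank_mono hsub
      rwa [LinearMap.finrank_range_of_inj (phi_injective hT), hfinfun] at this
    have h2 : Module.finrank ℂ C ≤ n := by
      have := Submodule.finrank_mono hCle
      rwa [hdimCl] at this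
    have h3 : Module.finrank ℂ C = n := le_antisymm h2 h1
    omega
  · intro hrank
    have hdimC : Module.finrank ℂ C = n := by omega
    have hCeq : C = Cl := Submodule.eq_of_le_of_finrank_eq hCle (by rw [hdimC, hdimCl])
    have hXlmem : vecM (X l) ∈ Cl := by
      rw [hCl, LinearMap.mem_ker, mulVecLin_apply, kronSum_mem_ker]
    have hXlC : vecM (X l) ∈ C := by rw [hCeq]; exact hXlmem
    have hcomm : ∀ k, X k * X l = X l * X k := (mem_ker_XiM X (X l)).1 hXlC
    refine ⟨S, hS, fun k => ?_⟩
    apply isDiag_of_commute_diagonal hd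
    apply conj_inj S
    calc S * ((S⁻¹ * X k * S) * diagonal d) * S⁻¹
        = (S * (S⁻¹ * X k * S) * S⁻¹) * (S * diagonal d * S⁻¹) := (conjMulConj S _ _).symm
      _ = X k * X l := by rw [conj_back, ← hXl]
      _ = X l * X k := hcomm k
      _ = (S * diagonal d * S⁻¹) * (S * (S⁻¹ * X k * S) * S⁻¹) := by rw [conj_back, ← hXl]
      _ = S * (diagonal d * (S⁻¹ * X k * S)) * S⁻¹ := conjMulConj S _ _

theorem simDiag_iff_rank_eq_of_distinct_eigenvalues {n K : ℕ}
    (X : Fin K → Matrix (Fin n) (Fin n) ℂ)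
    (h : ∃ l, HasDistinctEigenvalues (X l)) :
    SimDiag X ↔ (XiM X).rank = n ^ 2 - n :=
  simDiag_iff_rank_eq_of_distinct_eigenvalues' X h
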